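/- Let C = k[z,w]/(z²+z³+w²) and let C' = k[t] be a C-module via z ↦ −t²−1, w ↦ −t³−t. The map C' → End_C(C') sending u ∈ k[t] to the multiplication-by-u endomorphism is a ring isomorphism; in particular every C-linear endomorphism of C' is multiplication by a unique polynomial in k[t]. -/

import Mathlib

set_option synthInstance.maxHeartbeats 1000000
set_option maxHeartbeats 1000000

noncomputable section

/-- The polynomial `z² + z³ + w²` in `k[z,w]`, where `z = X 0` and `w = X 1`. -/
abbrev pC (k : Type*) [Field k] : MvPolynomial (Fin 2) k :=
  MvPolynomial.X 0 ^ 2 + MvPolynomial.X 0 ^ 3 + MvPolynomial.X 1 ^ 2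

/-- `C = k[z,w]/(z²+z³+w²)`, the coordinate ring of a nodal affine cubic. -/
abbrev C (k : Type*) [Field k] : Type _ :=
  MvPolynomial (Fin 2) k ⧸ Ideal.span {pC k}

/-- The `k`-algebra map `k[z,w] → k[t]` with `z ↦ −t²−1`, `w ↦ −t³−t`. -/
def fC (k : Type*) [Field k] : MvPolynomial (Fin 2) k →ₐ[k] Polynomial k :=
  MvPolynomial.aeval ![-(Polynomial.X ^ 2) - 1, -(Polynomial.X ^ 3) - Polynomial.X]

lemma fC_pC (k : Type*) [Field k] : fC k (pC k) = 0 := by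
  simp [fC, pC]
  ring

/-- The induced `k`-algebra map `α : C → k[t]` (normalization of the nodal cubic). -/
def αC (k : Type*) [Field k] : C k →ₐ[k] Polynomial k :=
  Ideal.Quotient.liftₐ (Ideal.span {pC k}) (fC k) (by
    intro a ha
    have h : Ideal.span {pC k} ≤ RingHom.ker (fC k).toRingHom := by
      rw [Ideal.span_le, Set.singleton_subset_iff, SetLike.mem_coe, RingHom.mem_ker]
      exact fC_pC k
    exact RingHom.mem_ker.mp (h ha))

/-- `C' = k[t]` as a `C`-module via `α`. -/
instance algC (k : Type*) [Field k] : Algebra (C k) (Polynomial k) :=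
  (αC k).toRingHom.toAlgebra

lemma smul_eq' (k : Type*) [Field k] (a : C k) (p : Polynomial k) :
    a • p = αC k a * p := rfl

lemma αC_z (k : Type*) [Field k] :
    αC k (Ideal.Quotient.mk _ (MvPolynomial.X 0)) = -(Polynomial.X ^ 2) - 1 := by
  show fC k (MvPolynomial.X 0) = _
  simp [αC, fC]

lemma αC_w (k : Type*) [Field k] :
    αC k (Ideal.Quotient.mk _ (MvPolynomial.X 1)) = -(Polynomial.X ^ 3) - Polynomial.X := by
  show fC k (MvPolynomial.X 1) = _
  simp [αC, fC]

/-- The `C`-linear map `C² → C' = k[t]`, `(a,b) ↦ α(a) − α(b)·t`. -/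
def gC (k : Type*) [Field k] : (C k × C k) →ₗ[C k] Polynomial k :=
  (Algebra.linearMap (C k) (Polynomial k)).comp (LinearMap.fst _ _ _) -
    (LinearMap.mulRight (C k) (Polynomial.X : Polynomial k)).comp
      ((Algebra.linearMap (C k) (Polynomial k)).comp (LinearMap.snd _ _ _))

/-- The map `C' → End_C(C')` sending `u ∈ k[t]` to the multiplication-by-`u` endomorphism
is a ring isomorphism: it is the (ring) homomorphism `Algebra.lmul`, which sends `u` to
multiplication by `u`, and it is bijective. -/
theorem stmt9 (k : Type*) [Field k] [IsAlgClosed k] [CharZero k] :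
    (∀ u v : Polynomial k, Algebra.lmul (C k) (Polynomial k) u v = u * v) ∧
    Function.Bijective (Algebra.lmul (C k) (Polynomial k)) := by
  have happ : ∀ u v : Polynomial k, Algebra.lmul (C k) (Polynomial k) u v = u * v :=
    fun u v => rfl
  refine ⟨happ, ?_, ?_⟩
  · intro u v h
    have := congrArg (fun g => (g : Module.End (C k) (Polynomial k)) 1) h
    simpa [happ] using this
  · intro f
    have h2 : ∀ q : Polynomial k,
        f ((Polynomial.X ^ 2 + 1) * q) = (Polynomial.X ^ 2 + 1) * f q := by
      intro q
      have : (Polynomial.X ^ 2 + 1 : Polynomial k) * q =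
          (-(Ideal.Quotient.mk _ (MvPolynomial.X 0)) : C k) • q := by
        rw [smul_eq', map_neg, αC_z]; ring
      rw [this, map_smul, smul_eq', map_neg, αC_z]; ring
    have h3 : ∀ q : Polynomial k,
        f ((Polynomial.X ^ 3 + Polynomial.X) * q) =
          (Polynomial.X ^ 3 + Polynomial.X) * f q := by
      intro q
      have : (Polynomial.X ^ 3 + Polynomial.X : Polynomial k) * q =
          (-(Ideal.Quotient.mk _ (MvPolynomial.X 1)) : C k) • q := by
        rw [smul_eq', map_neg, αC_w]; ring
      rw [this, map_smul, smul_eq', map_neg, αC_w]; ring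
    have h2' : ∀ q : Polynomial k,
        f (Polynomial.X ^ 2 * q) = Polynomial.X ^ 2 * f q := by
      intro q
      have := h2 q
      rw [add_mul, one_mul, map_add, add_mul, one_mul] at this
      exact add_right_cancel this
    have hX : ∀ q : Polynomial k, f (Polynomial.X * q) = Polynomial.X * f q := by
      intro q
      have hne : (Polynomial.X ^ 2 + 1 : Polynomial k) ≠ 0 := by
        have := Polynomial.X_pow_add_C_ne_zero (R := k) (n := 2) (by norm_num) 1
        simpa using this
      apply mul_left_cancel₀ hne
      have e1 : f (Polynomial.X ^ 3 * q) = Polynomial.X ^ 2 * f (Polynomial.X * q) := by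
        rw [show (Polynomial.X : Polynomial k) ^ 3 * q
            = Polynomial.X ^ 2 * (Polynomial.X * q) by ring, h2']
      have e2 := h3 q
      rw [add_mul, map_add, e1] at e2
      calc (Polynomial.X ^ 2 + 1) * f (Polynomial.X * q)
          = Polynomial.X ^ 2 * f (Polynomial.X * q) + f (Polynomial.X * q) := by ring
        _ = (Polynomial.X ^ 3 + Polynomial.X) * f q := e2
        _ = (Polynomial.X ^ 2 + 1) * (Polynomial.X * f q) := by ring
    have hCc : ∀ (c : k) (q : Polynomial k),
        f (Polynomial.C c * q) = Polynomial.C c * f q := by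
      intro c q
      have : (Polynomial.C c : Polynomial k) * q = (algebraMap k (C k) c) • q := by
        rw [smul_eq', AlgHom.commutes]
        simp [Polynomial.algebraMap_eq]
      rw [this, map_smul, smul_eq', AlgHom.commutes]
      simp [Polynomial.algebraMap_eq]
    have key : ∀ p : Polynomial k, f p = p * f 1 := by
      intro p
      induction p using Polynomial.induction_on with
      | C a => rw [← mul_one (Polynomial.C a), hCc]; ring
      | add p q hp hq => rw [map_add, hp, hq]; ring
      | monomial n a ih =>
        have : (Polynomial.C a : Polynomial k) * Polynomial.X ^ (n + 1)
            = Polynomial.X * (Polynomial.C a * Polynomial.X ^ n) := by ring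
        rw [this, hX, ih]; ring
    refine ⟨f 1, ?_⟩
    apply LinearMap.ext
    intro p
    rw [happ, key p]; ring


end
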